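/- Let f_x, f_y > 0, (u_0, v_0) ∈ ℝ², 0 < Z_min < Z_max, b ≥ 1, and let I be a finite nonempty set of pixels with N = |I|. For depth images L_P, L_Q : I → ℝ, matching each point of the first cloud to the point of the second cloud projected at the same pixel, the mean Euclidean distance between matched points satisfies (1/N) · Σ_{(u,v)∈I} ‖m(u,v,L_P(u,v)) − m(u,v,L_Q(u,v))‖₂ = ((Z_max − Z_min)/(N·(2^b − 1))) · Σ_{(u,v)∈I} R_{uv} · |L_P(u,v) − L_Q(u,v)|, where R_{uv} = √(1 + ((u−u_0)/f_x)² + ((v−v_0)/f_y)²). -/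

import Mathlib

/-- Affine depth model: luminance `L` ↦ depth `Z(L)`. -/
noncomputable def depthZ (Zmin Zmax : ℝ) (b : ℕ) (L : ℝ) : ℝ :=
  (Zmin - Zmax) / (2 ^ b - 1) * L + Zmax

/-- Pixel weight `R_{uv} = √(1 + x² + y²)` with normalized coordinates. -/
noncomputable def weightR (fx fy u0 v0 u v : ℝ) : ℝ :=
  Real.sqrt (1 + ((u - u0) / fx) ^ 2 + ((v - v0) / fy) ^ 2)

/-- The mapping `m` sending `(u, v, L)` to the corresponding 3D point in `ℝ³`
with the Euclidean norm. -/
noncomputable def camMapE (fx fy u0 v0 Zmin Zmax : ℝ) (b : ℕ) (u v L : ℝ) :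
    EuclideanSpace ℝ (Fin 3) :=
  WithLp.toLp 2 ![((u - u0) / fx) * depthZ Zmin Zmax b L,
    ((v - v0) / fy) * depthZ Zmin Zmax b L,
    depthZ Zmin Zmax b L]

lemma pointwise_dist (fx fy u0 v0 Zmin Zmax : ℝ)
    (hZ : Zmin < Zmax) (b : ℕ) (hb : 1 ≤ b) (u v LP LQ : ℝ) :
    ‖camMapE fx fy u0 v0 Zmin Zmax b u v LP -
        camMapE fx fy u0 v0 Zmin Zmax b u v LQ‖ =
      (Zmax - Zmin) / (2 ^ b - 1) * (weightR fx fy u0 v0 u v * |LP - LQ|) := by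
  have h2 : (1 : ℝ) < 2 ^ b := by
    calc (1:ℝ) < 2 := one_lt_two
    _ ≤ 2 ^ b := le_self_pow₀ (by norm_num) (by omega)
  have hpow : (0:ℝ) < 2 ^ b - 1 := by linarith
  set x := (u - u0) / fx
  set y := (v - v0) / fy
  set Δ := depthZ Zmin Zmax b LP - depthZ Zmin Zmax b LQ with hΔ
  have hΔeq : Δ = (Zmin - Zmax) / (2 ^ b - 1) * (LP - LQ) := by
    simp only [hΔ, depthZ]; ring
  rw [EuclideanSpace.norm_eq]
  rw [Fin.sum_univ_three]
  have e0 : (camMapE fx fy u0 v0 Zmin Zmax b u v LP -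
      camMapE fx fy u0 v0 Zmin Zmax b u v LQ) 0 = x * Δ := by
    simp [camMapE, hΔ]; ring
  have e1 : (camMapE fx fy u0 v0 Zmin Zmax b u v LP -
      camMapE fx fy u0 v0 Zmin Zmax b u v LQ) 1 = y * Δ := by
    simp [camMapE, hΔ]; ring
  have e2 : (camMapE fx fy u0 v0 Zmin Zmax b u v LP -
      camMapE fx fy u0 v0 Zmin Zmax b u v LQ) 2 = Δ := by
    simp [camMapE, hΔ]
  rw [e0, e1, e2]
  have hsum : ‖x * Δ‖ ^ 2 + ‖y * Δ‖ ^ 2 + ‖Δ‖ ^ 2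
      = (1 + x ^ 2 + y ^ 2) * Δ ^ 2 := by
    simp only [Real.norm_eq_abs, sq_abs]; ring
  rw [hsum, Real.sqrt_mul (by positivity), Real.sqrt_sq_eq_abs]
  have hΔabs : |Δ| = (Zmax - Zmin) / (2 ^ b - 1) * |LP - LQ| := by
    rw [hΔeq, abs_mul, abs_div, abs_of_pos hpow,
      abs_of_neg (by linarith : Zmin - Zmax < 0)]
    ring
  rw [hΔabs, weightR]
  ring

/-- The mean Euclidean distance between pixelwise-matched points of the two clouds
equals the weighted mean pixelwise luminance difference. -/
theorem mean_dist_eq_weighted_image_diff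
    (fx fy u0 v0 Zmin Zmax : ℝ) (hfx : 0 < fx) (hfy : 0 < fy)
    (hZmin : 0 < Zmin) (hZ : Zmin < Zmax) (b : ℕ) (hb : 1 ≤ b)
    (I : Finset (ℝ × ℝ)) (hI : I.Nonempty)
    (LP LQ : ℝ × ℝ → ℝ) :
    (1 / (I.card : ℝ)) *
        ∑ p ∈ I, ‖camMapE fx fy u0 v0 Zmin Zmax b p.1 p.2 (LP p) -
            camMapE fx fy u0 v0 Zmin Zmax b p.1 p.2 (LQ p)‖ =
      (Zmax - Zmin) / ((I.card : ℝ) * (2 ^ b - 1)) *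
        ∑ p ∈ I, weightR fx fy u0 v0 p.1 p.2 * |LP p - LQ p| := by
  have hrw : ∀ p ∈ I, ‖camMapE fx fy u0 v0 Zmin Zmax b p.1 p.2 (LP p) -
      camMapE fx fy u0 v0 Zmin Zmax b p.1 p.2 (LQ p)‖ =
      (Zmax - Zmin) / (2 ^ b - 1) *
        (weightR fx fy u0 v0 p.1 p.2 * |LP p - LQ p|) := fun p _ =>
    pointwise_dist fx fy u0 v0 Zmin Zmax hZ b hb p.1 p.2 (LP p) (LQ p)
  rw [Finset.sum_congr rfl hrw, ← Finset.mul_sum]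
  have hN : ((I.card : ℝ)) ≠ 0 := by
    exact_mod_cast Nat.cast_ne_zero.mpr (Finset.card_ne_zero_of_mem hI.choose_spec)
  field_simp
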